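/- arXiv:2411.04875 — 2 statements merged into one kernel-verified Lean document; each statement's English description precedes it below -/
import Mathlib

section
/- Let A be a unital C*-algebra, a a nonzero positive element of A, φ an Orlicz function, and x_1,…,x_n ∈ A each admitting an a-adjoint x_i^{#a}, with ‖x_i‖_a and ‖x_i^{#a}‖_a finite for all i. Let p_1,…,p_n ≥ 0 with Σ_{i=1}^n p_i = 1. Then φ(v_a(Σ_{i=1}^n p_i x_i)²) ≤ (1/2)·φ(v_a(Σ_{i=1}^n p_i x_i²)) + (1/2)·φ(‖Σ_{i=1}^n p_i x_i^{#a} x_i‖_a^{1/2} · ‖Σ_{i=1}^n p_i x_i x_i^{#a}‖_a^{1/2}). -/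
open scoped ComplexOrder

section generic

variable {M : Type*} [AddCommGroup M] [Module ℂ M]

/-- A positive semidefinite hermitian sesquilinear form (bare-function version). -/
structure SesqPos (B : M → M → ℂ) : Prop where
  add_left : ∀ u v w, B (u + v) w = B u w + B v w
  smul_left : ∀ (c : ℂ) (u w : M), B (c • u) w = c * B u w
  herm : ∀ u v, B u v = starRingEnd ℂ (B v u)
  pos : ∀ u, 0 ≤ B u u

namespace SesqPos

variable {B : M → M → ℂ} (hB : SesqPos B)
include hB

lemma add_right (u v w : M) : B u (v + w) = B u v + B u w := by
  rw [hB.herm u (v + w), hB.add_left, map_add, ← hB.herm, ← hB.herm]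

lemma smul_right (c : ℂ) (u v : M) : B u (c • v) = starRingEnd ℂ c * B u v := by
  rw [hB.herm u (c • v), hB.smul_left, map_mul, ← hB.herm]

lemma sub_left (u v w : M) : B (u - v) w = B u w - B v w := by
  have : u - v = u + (-1 : ℂ) • v := by simp [sub_eq_add_neg]
  rw [this, hB.add_left, hB.smul_left]; ring

lemma sub_right (u v w : M) : B u (v - w) = B u v - B u w := by
  have : v - w = v + (-1 : ℂ) • w := by simp [sub_eq_add_neg]
  rw [this, hB.add_right, hB.smul_right]; simp; ring

lemma re_nonneg (u : M) : 0 ≤ (B u u).re := (Complex.nonneg_iff.mp (hB.pos u)).1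

lemma im_zero (u : M) : (B u u).im = 0 := ((Complex.nonneg_iff.mp (hB.pos u)).2).symm

lemma self_eq_re (u : M) : B u u = ((B u u).re : ℂ) :=
  Complex.ext (by simp) (by simp [hB.im_zero u])

/-- Cauchy–Schwarz. -/
lemma abs_sq_le (u v : M) :
    ‖B u v‖ ^ 2 ≤ (B u u).re * (B v v).re := by
  set α := B u v with hα
  have key : ∀ s : ℝ, 0 ≤ (B u u).re - 2 * s * Complex.normSq α
      + s ^ 2 * (Complex.normSq α * (B v v).re) := by
    intro s
    have h0 := hB.pos (u - ((s : ℂ) * α) • v)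
    have hexp : B (u - ((s : ℂ) * α) • v) (u - ((s : ℂ) * α) • v)
        = B u u - ((s : ℝ) * Complex.normSq α : ℝ)
          - ((s : ℝ) * Complex.normSq α : ℝ)
          + ((s ^ 2 * Complex.normSq α : ℝ) : ℂ) * B v v := by
      simp only [hB.sub_left, hB.sub_right, hB.smul_left, hB.smul_right]
      have hvu : B v u = starRingEnd ℂ α := by rw [hα, ← hB.herm]
      rw [hvu]
      have hca : (starRingEnd ℂ) α * α = ((Complex.normSq α : ℝ) : ℂ) := by
        rw [mul_comm, Complex.mul_conj]
      rw [map_mul, Complex.conj_ofReal]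
      push_cast
      linear_combination (-(2:ℂ) * (s:ℂ) + (s:ℂ)^2 * B v v) * hca
    have h1 := (Complex.nonneg_iff.mp h0).1
    rw [hexp] at h1
    simp only [Complex.sub_re, Complex.add_re, Complex.ofReal_re, Complex.re_ofReal_mul] at h1
    nlinarith [h1]
  rw [Complex.sq_norm]
  rcases eq_or_ne α 0 with h0 | h0
  · simp [h0]
    exact mul_nonneg (hB.re_nonneg u) (hB.re_nonneg v)
  · have hN : 0 < Complex.normSq α := Complex.normSq_pos.mpr h0
    rcases eq_or_lt_of_le (hB.re_nonneg v) with hv | hv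
    · exfalso
      have := key (((B u u).re + 1) / Complex.normSq α)
      rw [← hv] at this
      have h2 : ((B u u).re + 1) / Complex.normSq α * Complex.normSq α
          = (B u u).re + 1 := div_mul_cancel₀ _ hN.ne'
      nlinarith [hB.re_nonneg u]
    · have h3 : (0:ℝ) < (B v v).re := hv
      have h4 := key (1 / (B v v).re)
      have h5 : (1/(B v v).re)^2 * (Complex.normSq α * (B v v).re)
          = Complex.normSq α / (B v v).re := by field_simp
      have h6 : 2*(1/(B v v).re)*Complex.normSq α = 2*(Complex.normSq α/(B v v).re) := by
        ring
      rw [h5, h6] at h4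
      have h7 : Complex.normSq α / (B v v).re ≤ (B u u).re := by linarith
      have h8 := (div_le_iff₀ h3).mp h7
      linarith

/-- Cauchy–Schwarz, sqrt form. -/
lemma abs_le_sqrt_mul_sqrt (u v : M) :
    ‖B u v‖ ≤ Real.sqrt (B u u).re * Real.sqrt (B v v).re := by
  have h := hB.abs_sq_le u v
  have h1 : ‖B u v‖ = Real.sqrt (‖B u v‖ ^ 2) :=
    (Real.sqrt_sq (norm_nonneg _)).symm
  rw [h1, ← Real.sqrt_mul (hB.re_nonneg u)]
  exact Real.sqrt_le_sqrt h

/-- Buzano's inequality. -/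
lemma buzano (e u v : M) (he : B e e = 1) :
    ‖B u e * B e v‖ ≤
      (Real.sqrt (B u u).re * Real.sqrt (B v v).re + ‖B u v‖) / 2 := by
  set c := B u e with hc
  set w := (2 * c) • e - u with hw
  have hwe : B w e = c := by
    rw [hw, hB.sub_left, hB.smul_left, he]; ring
  have hew : B e w = starRingEnd ℂ c := by rw [hB.herm, hwe]
  have huw : B u w = 2 * c * starRingEnd ℂ c - B u u := by
    rw [hw, hB.sub_right, hB.smul_right]
    have : B u e = c := hc.symm
    rw [this, map_mul]
    have h2 : starRingEnd ℂ (2 : ℂ) = 2 := Complex.conj_ofNat 2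
    rw [h2]; ring
  have hww : B w w = B u u := by
    rw [hw, hB.sub_left, hB.smul_left, hew, huw]
    ring
  have hwv : B w v = 2 * c * B e v - B u v := by
    rw [hw, hB.sub_left, hB.smul_left]
  have h1 : ‖B w v‖ ≤ Real.sqrt (B u u).re * Real.sqrt (B v v).re := by
    have := hB.abs_le_sqrt_mul_sqrt w v
    rwa [hww] at this
  have h2 : ‖2 * (B u e * B e v)‖
      ≤ Real.sqrt (B u u).re * Real.sqrt (B v v).re + ‖B u v‖ := by
    have : (2 : ℂ) * (B u e * B e v) = B w v + B u v := by
      rw [hwv, ← hc]; ring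
    rw [this]
    exact le_trans (norm_add_le _ _) (by linarith)
  rw [norm_mul, Complex.norm_two] at h2
  linarith

end SesqPos
end generic

section

variable {A : Type*} [CStarAlgebra A] [PartialOrder A] [StarOrderedRing A]

/-- A positive linear functional on `A`: `f (x* x) ≥ 0` for all `x`. -/
def IsPosLF (f : A →ₗ[ℂ] ℂ) : Prop := ∀ x : A, 0 ≤ f (star x * x)

/-- Membership in `S_a(A)`: positive linear functionals `f` with `f a = 1`. -/
def MemSa (a : A) (f : A →ₗ[ℂ] ℂ) : Prop := IsPosLF f ∧ f a = 1

/-- The set of values whose supremum is the `a`-seminorm `‖x‖ₐ`. -/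
def aNormSet (a x : A) : Set ℝ :=
  {r : ℝ | ∃ f : A →ₗ[ℂ] ℂ, MemSa a f ∧ r = Real.sqrt (f (star x * a * x)).re}

/-- The `a`-seminorm `‖x‖ₐ = sup {√(f(x* a x)) : f ∈ S_a(A)}`. -/
noncomputable def aNorm (a x : A) : ℝ := sSup (aNormSet a x)

/-- The `a`-numerical radius `vₐ(x) = sup {|f(a x)| : f ∈ S_a(A)}`. -/
noncomputable def aNR (a x : A) : ℝ :=
  sSup {r : ℝ | ∃ f : A →ₗ[ℂ] ℂ, MemSa a f ∧ r = ‖f (a * x)‖}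

/-- An Orlicz function: `φ : [0,∞) → [0,∞)` (modelled on `ℝ`) which is continuous, convex,
non-decreasing on `[0,∞)`, with `φ 0 = 0`, `φ u > 0` for `u > 0`, and `φ u → ∞` as `u → ∞`. -/
structure IsOrlicz (φ : ℝ → ℝ) : Prop where
  continuousOn : ContinuousOn φ (Set.Ici 0)
  convexOn : ConvexOn ℝ (Set.Ici 0) φ
  monotoneOn : MonotoneOn φ (Set.Ici 0)
  map_zero : φ 0 = 0
  pos : ∀ u : ℝ, 0 < u → 0 < φ u
  tendsto_atTop : Filter.Tendsto φ Filter.atTop Filter.atTop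


section aux
variable (a : A)

/-- Hermitian symmetry of a positive linear functional, via polarization. -/
lemma IsPosLF.conj_symm {f : A →ₗ[ℂ] ℂ} (hf : IsPosLF f) (c d : A) :
    f (star d * c) = starRingEnd ℂ (f (star c * d)) := by
  have him : ∀ y : A, (f (star y * y)).im = 0 := fun y =>
    ((Complex.nonneg_iff.mp (hf y)).2).symm
  have expand : ∀ t : ℂ, f (star (c + t • d) * (c + t • d))
      = f (star c * c) + starRingEnd ℂ t * f (star d * c) + t * f (star c * d)
        + (t * starRingEnd ℂ t) * f (star d * d) := by
    intro t
    have halg : star (c + t • d) * (c + t • d)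
        = star c * c + (starRingEnd ℂ t) • (star d * c) + t • (star c * d)
          + (t * starRingEnd ℂ t) • (star d * d) := by
      rw [star_add, star_smul, add_mul, mul_add, mul_add, RCLike.star_def]
      rw [smul_mul_assoc, mul_smul_comm, mul_smul_comm, smul_mul_assoc, smul_smul]
      abel_nf
    rw [halg, map_add, map_add, map_add, map_smul, map_smul, map_smul, smul_eq_mul,
      smul_eq_mul, smul_eq_mul]
  have e1 : (f (star d * c)).im + (f (star c * d)).im = 0 := by
    have h := him (c + (1 : ℂ) • d)
    rw [expand 1] at h
    simp only [map_one, one_mul, mul_one, Complex.add_im, Complex.one_im, Complex.mul_im,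
      Complex.one_re, him c, him d] at h
    linarith
  have e2 : (f (star d * c)).re = (f (star c * d)).re := by
    have h := him (c + Complex.I • d)
    rw [expand Complex.I] at h
    simp only [Complex.conj_I, Complex.add_im, Complex.mul_im, Complex.neg_im, Complex.neg_re,
      Complex.I_re, Complex.I_im, him c, him d] at h
    ring_nf at h
    linarith
  apply Complex.ext
  · simpa using e2
  · simp only [Complex.conj_im]
    linarith

variable (a : A)

/-- The scalar sesquilinear form associated to `f` and `a`. -/
lemma sForm_sesqPos (ha : 0 ≤ a) {f : A →ₗ[ℂ] ℂ} (hf : IsPosLF f) :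
    SesqPos (fun c d : A => f (star d * a * c)) where
  add_left u v w := by rw [← map_add, ← mul_add]
  smul_left c u w := by rw [mul_smul_comm, map_smul, smul_eq_mul]
  herm u v := by
    have h1 : star v * a * u = star v * (a * u) := by rw [mul_assoc]
    have h2 : star u * a * v = star (a * u) * v := by
      rw [star_mul, (IsSelfAdjoint.of_nonneg ha).star_eq, mul_assoc]
    rw [h1, h2]
    exact hf.conj_symm (a * u) v
  pos u := by
    have hb : star (CFC.sqrt a) * CFC.sqrt a = a := by
      rw [(IsSelfAdjoint.of_nonneg (CFC.sqrt_nonneg (a:=a))).star_eq, CFC.sqrt_mul_sqrt_self a ha]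
    have : star u * a * u = star (CFC.sqrt a * u) * (CFC.sqrt a * u) := by
      rw [star_mul, mul_assoc, mul_assoc, ← mul_assoc (star (CFC.sqrt a)), hb]
    rw [this]
    exact hf (CFC.sqrt a * u)

/-- The weighted direct-sum sesquilinear form. -/
lemma vForm_sesqPos (ha : 0 ≤ a) {f : A →ₗ[ℂ] ℂ} (hf : IsPosLF f)
    {n : ℕ} (p : Fin n → ℝ) (hp : ∀ i, 0 ≤ p i) :
    SesqPos (fun u v : Fin n → A => ∑ i, (p i : ℂ) * f (star (v i) * a * u i)) where
  add_left u v w := by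
    rw [← Finset.sum_add_distrib]
    refine Finset.sum_congr rfl fun i _ => ?_
    rw [Pi.add_apply, (sForm_sesqPos a ha hf).add_left (u i) (v i) (w i)]
    ring
  smul_left c u w := by
    rw [Finset.mul_sum]
    refine Finset.sum_congr rfl fun i _ => ?_
    rw [Pi.smul_apply, (sForm_sesqPos a ha hf).smul_left c (u i) (w i)]
    ring
  herm u v := by
    rw [show (starRingEnd ℂ) (∑ i, (p i : ℂ) * f (star (u i) * a * v i))
        = ∑ i, (starRingEnd ℂ) ((p i : ℂ) * f (star (u i) * a * v i)) from map_sum _ _ _]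
    refine Finset.sum_congr rfl fun i _ => ?_
    rw [map_mul (starRingEnd ℂ), Complex.conj_ofReal,
      (sForm_sesqPos a ha hf).herm (u i) (v i)]
  pos u := Finset.sum_nonneg fun i _ => mul_nonneg
    (by exact_mod_cast Complex.zero_le_real.mpr (hp i))
    ((sForm_sesqPos a ha hf).pos (u i))

lemma aNorm_nonneg (x : A) : 0 ≤ aNorm a x :=
  Real.sSup_nonneg fun r hr => by obtain ⟨f, _, rfl⟩ := hr; exact Real.sqrt_nonneg _

lemma re_le_aNorm_sq (ha : 0 ≤ a) {y : A} (hy : BddAbove (aNormSet a y))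
    {g : A →ₗ[ℂ] ℂ} (hg : MemSa a g) :
    (g (star y * a * y)).re ≤ (aNorm a y)^2 := by
  have h0 : 0 ≤ (g (star y * a * y)).re := (sForm_sesqPos a ha hg.1).re_nonneg y
  have hel : Real.sqrt ((g (star y * a * y)).re) ∈ aNormSet a y := ⟨g, hg, rfl⟩
  have h1 := le_csSup hy hel
  calc (g (star y * a * y)).re = (Real.sqrt ((g (star y * a * y)).re))^2 :=
        (Real.sq_sqrt h0).symm
    _ ≤ (aNorm a y)^2 := pow_le_pow_left₀ (Real.sqrt_nonneg _) h1 2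

/-- Key submultiplicativity bound. -/
lemma keysub (ha : 0 ≤ a) (y z w : A) (hrel : star y * a = a * w)
    (hy : BddAbove (aNormSet a y)) (hz : BddAbove (aNormSet a z))
    {g : A →ₗ[ℂ] ℂ} (hg : MemSa a g) :
    (g (star (y * z) * a * (y * z))).re ≤ (aNorm a z * aNorm a y)^2 := by
  have hS := sForm_sesqPos a ha hg.1
  set t := g (star z * a * z) with hts
  have ht : 0 ≤ t := hS.pos z
  have hE1 : star (y * z) * a * (y * z) = star z * (star y * a * y) * z := by
    simp [star_mul, mul_assoc]
  by_cases h0 : t = 0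
  · have hE2 : star (y * z) * a * (y * z) = star z * a * (w * (y * z)) := by
      calc star (y * z) * a * (y * z) = star z * ((star y * a) * (y * z)) := by
            simp [star_mul, mul_assoc]
        _ = star z * ((a * w) * (y * z)) := by rw [hrel]
        _ = star z * a * (w * (y * z)) := by simp [mul_assoc]
    have hcs := hS.abs_sq_le (w * (y * z)) z
    rw [← hts, h0] at hcs
    simp only [Complex.zero_re, mul_zero] at hcs
    have habs : ‖g (star z * a * (w * (y * z)))‖ = 0 := by
      have := norm_nonneg (g (star z * a * (w * (y * z))))
      nlinarith
    have : g (star (y * z) * a * (y * z)) = 0 := by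
      rw [hE2]
      exact norm_eq_zero.mp habs
    rw [this]
    simpa using sq_nonneg (aNorm a z * aNorm a y)
  · -- normalize the conjugated functional
    have htre : 0 < t.re := by
      rcases Complex.nonneg_iff.mp ht with ⟨h1, h2⟩
      rcases lt_or_eq_of_le h1 with h | h
      · exact h
      · exact absurd (Complex.ext h.symm h2.symm) h0
    set h : A →ₗ[ℂ] ℂ :=
      ((t.re)⁻¹ : ℂ) • (g ∘ₗ (LinearMap.mulRight ℂ z) ∘ₗ (LinearMap.mulLeft ℂ (star z)))
      with hh
    have happ : ∀ c : A, h c = ((t.re)⁻¹ : ℂ) * g (star z * c * z) := fun c => rfl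
    have hpos : IsPosLF h := by
      intro c
      rw [happ]
      have : star z * (star c * c) * z = star (c * z) * (c * z) := by
        simp [star_mul, mul_assoc]
      rw [this]
      exact mul_nonneg (by exact_mod_cast Complex.zero_le_real.mpr (by positivity))
        (hg.1 (c * z))
    have hteq : t = (t.re : ℂ) :=
      Complex.ext rfl (by simpa using (Complex.nonneg_iff.mp ht).2.symm)
    have htne : ((t.re : ℂ)) ≠ 0 := by exact_mod_cast htre.ne'
    have hmem : MemSa a h := by
      refine ⟨hpos, ?_⟩
      rw [happ, ← hts, hteq]
      exact inv_mul_cancel₀ htne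
    have hyb := re_le_aNorm_sq a ha hy hmem
    have hzb : t.re ≤ (aNorm a z)^2 := re_le_aNorm_sq a ha hz hg
    have hge : g (star (y * z) * a * (y * z)) = (t.re : ℂ) * h (star y * a * y) := by
      rw [happ, hE1, ← mul_assoc ((t.re:ℂ)) _ _, mul_inv_cancel₀ htne, one_mul]
    have hre : 0 ≤ (h (star y * a * y)).re := (sForm_sesqPos a ha hpos).re_nonneg y
    rw [hge, Complex.re_ofReal_mul, mul_pow]
    exact mul_le_mul hzb hyb hre (sq_nonneg _)

lemma sum_form_expand (g : A →ₗ[ℂ] ℂ) {n : ℕ} (c : Fin n → ℂ) (u : Fin n → A) :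
    g (star (∑ i, c i • u i) * a * (∑ j, c j • u j))
      = ∑ i, ∑ j, (starRingEnd ℂ (c i) * c j) * g (star (u i) * a * (u j)) := by
  rw [star_sum]
  simp only [star_smul, RCLike.star_def, Finset.sum_mul, Finset.mul_sum,
    smul_mul_assoc, mul_smul_comm, smul_smul, map_sum, map_smul, smul_eq_mul, mul_assoc]
  rw [Finset.sum_comm]
  exact Finset.sum_congr rfl fun i _ => Finset.sum_congr rfl fun j _ => by ring

lemma bdd_aNormSet_sum (ha : 0 ≤ a) {n : ℕ} (p : Fin n → ℝ) (hp : ∀ i, 0 ≤ p i)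
    (c : Fin n → A) (M : Fin n → ℝ) (hM : ∀ i, 0 ≤ M i)
    (hbd : ∀ (g : A →ₗ[ℂ] ℂ), MemSa a g → ∀ i, (g (star (c i) * a * (c i))).re ≤ (M i)^2) :
    BddAbove (aNormSet a (∑ i, (p i : ℂ) • c i)) := by
  refine ⟨∑ i, p i * M i, fun r hr => ?_⟩
  obtain ⟨g, hg, rfl⟩ := hr
  have hS := sForm_sesqPos a ha hg.1
  have hsqrt : ∀ i, Real.sqrt ((g (star (c i) * a * (c i))).re) ≤ M i := fun i => by
    have := Real.sqrt_le_sqrt (hbd g hg i)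
    rwa [Real.sqrt_sq (hM i)] at this
  have hterm : ∀ i j, ((starRingEnd ℂ ((p i : ℂ))) * (p j : ℂ)
      * g (star (c i) * a * (c j))).re ≤ (p i * M i) * (p j * M j) := by
    intro i j
    rw [Complex.conj_ofReal, ← Complex.ofReal_mul, Complex.re_ofReal_mul]
    have h1 : (g (star (c i) * a * (c j))).re ≤ ‖g (star (c i) * a * (c j))‖ :=
      Complex.re_le_norm _
    have h2 : ‖g (star (c i) * a * (c j))‖
        ≤ Real.sqrt ((g (star (c j) * a * (c j))).re)
          * Real.sqrt ((g (star (c i) * a * (c i))).re) := hS.abs_le_sqrt_mul_sqrt (c j) (c i)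
    have h3 : ‖g (star (c i) * a * (c j))‖ ≤ M j * M i :=
      le_trans h2 (mul_le_mul (hsqrt j) (hsqrt i) (Real.sqrt_nonneg _) (hM j))
    have h4 : (g (star (c i) * a * (c j))).re ≤ M j * M i := le_trans h1 h3
    have h5 : 0 ≤ p i * p j := mul_nonneg (hp i) (hp j)
    nlinarith [h5, h4]
  have hre : (g (star (∑ i, (p i : ℂ) • c i) * a * (∑ j, (p j : ℂ) • c j))).re
      ≤ (∑ i, p i * M i)^2 := by
    rw [sum_form_expand, Complex.re_sum]
    have : ∀ i ∈ Finset.univ, (∑ j, (starRingEnd ℂ ((p i : ℂ))) * (p j : ℂ)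
        * g (star (c i) * a * (c j))).re ≤ ∑ j, (p i * M i) * (p j * M j) := by
      intro i _
      rw [Complex.re_sum]
      exact Finset.sum_le_sum fun j _ => hterm i j
    calc (∑ i, (∑ j, (starRingEnd ℂ ((p i : ℂ))) * (p j : ℂ)
          * g (star (c i) * a * (c j))).re)
        ≤ ∑ i, ∑ j, (p i * M i) * (p j * M j) := Finset.sum_le_sum this
      _ = (∑ i, p i * M i)^2 := by rw [sq, Finset.sum_mul_sum]
  have := Real.sqrt_le_sqrt hre
  rwa [Real.sqrt_sq (Finset.sum_nonneg fun i _ => mul_nonneg (hp i) (hM i))] at this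


lemma sqrt_le_aNorm {y : A} (hy : BddAbove (aNormSet a y))
    {g : A →ₗ[ℂ] ℂ} (hg : MemSa a g) :
    Real.sqrt ((g (star y * a * y)).re) ≤ aNorm a y := le_csSup hy ⟨g, hg, rfl⟩

end aux

/-- Orlicz-function bound for the `a`-numerical radius of a convex
combination. -/
theorem stmt14 (a : A) (ha : 0 ≤ a) (ha0 : a ≠ 0)
    (n : ℕ) (x xadj : Fin n → A) (hadj : ∀ i, a * xadj i = star (x i) * a)
    (hx : ∀ i, BddAbove (aNormSet a (x i))) (hxa : ∀ i, BddAbove (aNormSet a (xadj i)))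
    (p : Fin n → ℝ) (hp : ∀ i, 0 ≤ p i) (hp1 : ∑ i, p i = 1)
    (φ : ℝ → ℝ) (hφ : IsOrlicz φ) :
    φ (aNR a (∑ i, (p i : ℂ) • x i) ^ 2) ≤
      (1 / 2) * φ (aNR a (∑ i, (p i : ℂ) • (x i * x i))) +
        (1 / 2) * φ ((aNorm a (∑ i, (p i : ℂ) • (xadj i * x i))) ^ ((1 : ℝ) / 2) *
          (aNorm a (∑ i, (p i : ℂ) • (x i * xadj i))) ^ ((1 : ℝ) / 2)) := by
  classical
  have hsa : star a = a := (IsSelfAdjoint.of_nonneg ha).star_eq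
  have hadj' : ∀ i, star (xadj i) * a = a * x i := by
    intro i
    have h := congrArg star (hadj i)
    rwa [star_mul, star_mul, star_star, hsa] at h
  set X := ∑ i, (p i : ℂ) • x i with hX
  set Q := ∑ i, (p i : ℂ) • (x i * x i) with hQ
  set Z1 := ∑ i, (p i : ℂ) • (xadj i * x i) with hZ1
  set Z2 := ∑ i, (p i : ℂ) • (x i * xadj i) with hZ2
  have hM1 : ∀ i, 0 ≤ aNorm a (x i) * aNorm a (xadj i) := fun i =>
    mul_nonneg (aNorm_nonneg a _) (aNorm_nonneg a _)
  have hM2 : ∀ i, 0 ≤ aNorm a (xadj i) * aNorm a (x i) := fun i =>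
    mul_nonneg (aNorm_nonneg a _) (aNorm_nonneg a _)
  have bddZ1 : BddAbove (aNormSet a Z1) :=
    bdd_aNormSet_sum a ha p hp _ (fun i => aNorm a (x i) * aNorm a (xadj i)) hM1
      (fun g hg i => keysub a ha (xadj i) (x i) (x i) (hadj' i) (hxa i) (hx i) hg)
  have bddZ2 : BddAbove (aNormSet a Z2) :=
    bdd_aNormSet_sum a ha p hp _ (fun i => aNorm a (xadj i) * aNorm a (x i)) hM2
      (fun g hg i => keysub a ha (x i) (xadj i) (xadj i) (hadj i).symm (hx i) (hxa i) hg)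
  have bddQ : BddAbove {r : ℝ | ∃ f : A →ₗ[ℂ] ℂ, MemSa a f ∧ r = ‖f (a * Q)‖} := by
    refine ⟨∑ i, p i * (aNorm a (x i) * aNorm a (xadj i)), fun r hr => ?_⟩
    obtain ⟨g, hg, rfl⟩ := hr
    have hS := sForm_sesqPos a ha hg.1
    have hlin : g (a * Q) = ∑ i, (p i : ℂ) * g (star (xadj i) * a * x i) := by
      rw [hQ, Finset.mul_sum, map_sum]
      refine Finset.sum_congr rfl fun i _ => ?_
      rw [mul_smul_comm, map_smul, smul_eq_mul]
      congr 1
      rw [hadj' i, mul_assoc]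
    rw [hlin]
    refine le_trans (norm_sum_le _ _) (Finset.sum_le_sum fun i _ => ?_)
    rw [norm_mul, Complex.norm_real, Real.norm_eq_abs, abs_of_nonneg (hp i)]
    refine mul_le_mul_of_nonneg_left ?_ (hp i)
    have h2 : ‖g (star (xadj i) * a * x i)‖
        ≤ Real.sqrt ((g (star (x i) * a * x i)).re)
          * Real.sqrt ((g (star (xadj i) * a * (xadj i))).re) :=
      hS.abs_le_sqrt_mul_sqrt (x i) (xadj i)
    exact le_trans h2 (mul_le_mul (sqrt_le_aNorm a (hx i) hg) (sqrt_le_aNorm a (hxa i) hg)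
      (Real.sqrt_nonneg _) (aNorm_nonneg a _))
  set NQ := aNR a Q with hNQ
  set P := (aNorm a Z1) ^ ((1:ℝ)/2) * (aNorm a Z2) ^ ((1:ℝ)/2) with hP
  have hNQ0 : 0 ≤ NQ := Real.sSup_nonneg fun r hr => by
    obtain ⟨f, _, rfl⟩ := hr; exact norm_nonneg _
  have hP0 : 0 ≤ P := mul_nonneg (Real.rpow_nonneg (aNorm_nonneg a _) _)
    (Real.rpow_nonneg (aNorm_nonneg a _) _)
  set K := (P + NQ) / 2 with hK
  have hK0 : 0 ≤ K := by positivity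
  -- pointwise bound
  have key : ∀ f : A →ₗ[ℂ] ℂ, MemSa a f → ‖f (a * X)‖ ^ 2 ≤ K := by
    intro f hf
    have hS := sForm_sesqPos a ha hf.1
    have hV := vForm_sesqPos a ha hf.1 p hp
    set B : (Fin n → A) → (Fin n → A) → ℂ :=
      fun u v => ∑ i, (p i : ℂ) * f (star (v i) * a * u i) with hB
    have hee : B (fun _ => (1:A)) (fun _ => (1:A)) = 1 := by
      rw [hB]
      simp only [star_one, one_mul, mul_one, hf.2]
      rw [← Complex.ofReal_sum]
      · push_cast [hp1]; norm_num
    have hue : B x (fun _ => (1:A)) = f (a * X) := by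
      rw [hB, hX, Finset.mul_sum, map_sum]
      refine Finset.sum_congr rfl fun i _ => ?_
      rw [mul_smul_comm, map_smul, smul_eq_mul]
      simp only [star_one, one_mul]
    have hev : B (fun _ => (1:A)) xadj = f (a * X) := by
      rw [hB, hX, Finset.mul_sum, map_sum]
      refine Finset.sum_congr rfl fun i _ => ?_
      rw [mul_smul_comm, map_smul, smul_eq_mul]
      rw [mul_one, hadj' i]
    have huv : B x xadj = f (a * Q) := by
      rw [hB, hQ, Finset.mul_sum, map_sum]
      refine Finset.sum_congr rfl fun i _ => ?_
      rw [mul_smul_comm, map_smul, smul_eq_mul]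
      rw [hadj' i, mul_assoc]
    have huu : B x x = f (a * Z1) := by
      rw [hB, hZ1, Finset.mul_sum, map_sum]
      refine Finset.sum_congr rfl fun i _ => ?_
      rw [mul_smul_comm, map_smul, smul_eq_mul]
      rw [← hadj i, mul_assoc]
    have hvv : B xadj xadj = f (a * Z2) := by
      rw [hB, hZ2, Finset.mul_sum, map_sum]
      refine Finset.sum_congr rfl fun i _ => ?_
      rw [mul_smul_comm, map_smul, smul_eq_mul]
      rw [hadj' i, mul_assoc]
    have hbuz := hV.buzano (fun _ => (1:A)) x xadj hee
    rw [hue, hev, huu, hvv, huv] at hbuz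
    -- bound the three quantities
    have hQb : ‖f (a * Q)‖ ≤ NQ := le_csSup bddQ ⟨f, hf, rfl⟩
    have hZb : ∀ (Z : A), BddAbove (aNormSet a Z) →
        Real.sqrt ((f (a * Z)).re) ≤ (aNorm a Z) ^ ((1:ℝ)/2) := by
      intro Z hbdd
      have hcs := hS.abs_sq_le Z (1:A)
      simp only [star_one, one_mul, mul_one] at hcs
      rw [hf.2] at hcs
      simp only [Complex.one_re, mul_one] at hcs
      have h1 : ‖f (a * Z)‖ ≤ Real.sqrt ((f (star Z * a * Z)).re) := by
        have := Real.sqrt_le_sqrt hcs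
        rwa [Real.sqrt_sq (norm_nonneg _)] at this
      have h2 : (f (a * Z)).re ≤ aNorm a Z :=
        le_trans (Complex.re_le_norm _) (le_trans h1 (sqrt_le_aNorm a hbdd hf))
      rw [← Real.sqrt_eq_rpow]
      exact Real.sqrt_le_sqrt h2
    have hZ1b := hZb Z1 bddZ1
    have hZ2b := hZb Z2 bddZ2
    have habs2 : ‖f (a * X) * f (a * X)‖ = ‖f (a * X)‖ ^ 2 := by
      rw [norm_mul, sq]
    rw [habs2] at hbuz
    have hmul : Real.sqrt ((f (a * Z1)).re) * Real.sqrt ((f (a * Z2)).re) ≤ P := by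
      rw [hP]
      exact mul_le_mul hZ1b hZ2b (Real.sqrt_nonneg _) (Real.rpow_nonneg (aNorm_nonneg a _) _)
    rw [hK]
    refine le_trans hbuz ?_
    have := add_le_add hmul hQb
    linarith
  -- conclude
  have hXle : aNR a X ≤ Real.sqrt K := by
    refine Real.sSup_le (fun r hr => ?_) (Real.sqrt_nonneg K)
    obtain ⟨f, hf, rfl⟩ := hr
    have h1 := key f hf
    have h2 : ‖f (a * X)‖ = Real.sqrt (‖f (a * X)‖ ^ 2) :=
      (Real.sqrt_sq (norm_nonneg _)).symm
    rw [h2]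
    exact Real.sqrt_le_sqrt h1
  have hX0 : 0 ≤ aNR a X := Real.sSup_nonneg fun r hr => by
    obtain ⟨f, _, rfl⟩ := hr; exact norm_nonneg _
  have hsq : aNR a X ^ 2 ≤ K := by
    have h1 : aNR a X ^ 2 ≤ Real.sqrt K ^ 2 := pow_le_pow_left₀ hX0 hXle 2
    rwa [Real.sq_sqrt hK0] at h1
  have hmono := hφ.monotoneOn (Set.mem_Ici.mpr (sq_nonneg (aNR a X)))
    (Set.mem_Ici.mpr hK0) hsq
  have hconv := hφ.convexOn.2 (Set.mem_Ici.mpr hNQ0) (Set.mem_Ici.mpr hP0)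
    (by norm_num : (0:ℝ) ≤ 1/2) (by norm_num : (0:ℝ) ≤ 1/2) (by norm_num : (1:ℝ)/2 + 1/2 = 1)
  have hKe : ((1:ℝ)/2) • NQ + ((1:ℝ)/2) • P = K := by
    rw [hK, smul_eq_mul, smul_eq_mul]; ring
  rw [hKe] at hconv
  calc φ (aNR a X ^ 2) ≤ φ K := hmono
    _ ≤ ((1:ℝ)/2) • φ NQ + ((1:ℝ)/2) • φ P := hconv
    _ = 1/2 * φ NQ + 1/2 * φ P := by rw [smul_eq_mul, smul_eq_mul]

end
end

section
/- Let A be a unital C*-algebra, p, q, r, s ∈ A, and x, y invertible elements of A. Then for every 0 ≤ α ≤ 1 and every real n ≥ 2, v(p x q + r y s) ≤ (1/n)·‖(p·|x*|^{2(1−α)}·p*)^{n/2} + (r·|y*|^{2(1−α)}·r*)^{n/2}‖ + ((n − 1)/n)·(‖q*·|x|^{2α}·q‖^{n/(2(n−1))} + ‖s*·|y|^{2α}·s‖^{n/(2(n−1))}), where |x| = (x*x)^{1/2}, |x*| = (x x*)^{1/2}, and all real powers of positive elements are taken by continuous functional calculus. -/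
open scoped ComplexOrder

section

variable {A : Type*} [CStarAlgebra A] [PartialOrder A] [StarOrderedRing A]

/-- A state on `A`: a positive linear functional with `g 1 = 1`. -/
def IsState (g : A →ₗ[ℂ] ℂ) : Prop := IsPosLF g ∧ g 1 = 1

/-- The (algebraic) numerical radius `v(x) = sup {|g x| : g a state on A}`. -/
noncomputable def nr (x : A) : ℝ :=
  sSup {r : ℝ | ∃ g : A →ₗ[ℂ] ℂ, IsState g ∧ r = ‖g x‖}

/-- The modulus `|w| = (w* w)^{1/2}` given by the continuous functional calculus. -/
noncomputable def absA (w : A) : A := cfc (fun t : ℝ => Real.sqrt t) (star w * w)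

lemma posLF_nonneg {g : A →ₗ[ℂ] ℂ} (hg : IsPosLF g) {a : A} (ha : 0 ≤ a) : 0 ≤ g a := by
  rw [StarOrderedRing.nonneg_iff] at ha
  induction ha using AddSubmonoid.closure_induction with
  | mem z hz => obtain ⟨s, rfl⟩ := hz; exact hg s
  | zero => simp
  | add a b _ _ ha hb => rw [map_add]; exact add_nonneg ha hb

lemma posLF_mono {g : A →ₗ[ℂ] ℂ} (hg : IsPosLF g) {a b : A} (h : a ≤ b) : g a ≤ g b := by
  have := posLF_nonneg hg (sub_nonneg.mpr h)
  rw [map_sub] at this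
  exact sub_nonneg.mp this

lemma state_le_norm {g : A →ₗ[ℂ] ℂ} (hg : IsState g) {a : A} (ha : 0 ≤ a) :
    g a ≤ (‖a‖ : ℂ) := by
  have hsa : IsSelfAdjoint a := .of_nonneg ha
  have h1 : a ≤ algebraMap ℝ A ‖a‖ := hsa.le_algebraMap_norm_self
  have := posLF_mono hg.1 h1
  rwa [Algebra.algebraMap_eq_smul_one, show (‖a‖ : ℝ) • (1:A) = (‖a‖ : ℂ) • (1:A) by
    simp [Complex.coe_smul], map_smul, hg.2, smul_eq_mul, mul_one] at this

lemma state_re_le_norm {g : A →ₗ[ℂ] ℂ} (hg : IsState g) {a : A} (ha : 0 ≤ a) :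
    (g a).re ≤ ‖a‖ := by
  simpa using (Complex.le_def.mp (state_le_norm hg ha)).1

lemma posLF_re_nonneg {g : A →ₗ[ℂ] ℂ} (hg : IsPosLF g) {a : A} (ha : 0 ≤ a) :
    0 ≤ (g a).re := by
  simpa using (Complex.le_def.mp (posLF_nonneg hg ha)).1

lemma posLF_real {g : A →ₗ[ℂ] ℂ} (hg : IsPosLF g) {a : A} (ha : 0 ≤ a) :
    (g a : ℂ) = ((g a).re : ℂ) := by
  have := (Complex.le_def.mp (posLF_nonneg hg ha)).2
  exact Complex.ext rfl (by simpa using this.symm)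



lemma posLF_im_mul_self {g : A →ₗ[ℂ] ℂ} (hg : IsPosLF g) (z : A) :
    (g (star z * z)).im = 0 := by
  have := (Complex.le_def.mp (hg z)).2
  simpa using this.symm

lemma posLF_star_comm {g : A →ₗ[ℂ] ℂ} (hg : IsPosLF g) (a b : A) :
    g (star b * a) = starRingEnd ℂ (g (star a * b)) := by
  set w := g (star a * b) with hw
  set v := g (star b * a) with hv
  have h1 : (g (star (a + b) * (a + b))).im = 0 := posLF_im_mul_self hg _
  have h2 : (g (star (a + Complex.I • b) * (a + Complex.I • b))).im = 0 :=
    posLF_im_mul_self hg _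
  have ea : star (a + b) * (a + b) = star a * a + star a * b + star b * a + star b * b := by
    rw [star_add]
    simp only [add_mul, mul_add]
    abel
  have eb : star (a + Complex.I • b) * (a + Complex.I • b)
      = star a * a + Complex.I • (star a * b) + (-Complex.I) • (star b * a)
        + star b * b := by
    have hii : -Complex.I * Complex.I = (1 : ℂ) := by
      simp [Complex.I_mul_I]
    rw [star_add, star_smul]
    simp only [Complex.star_def, Complex.conj_I]
    simp only [add_mul, mul_add, smul_add, smul_mul_assoc, mul_smul_comm, smul_smul, hii,
      mul_neg, neg_mul, Complex.I_mul_I, neg_neg, one_smul]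
    abel
  rw [ea] at h1; rw [eb] at h2
  simp only [map_add, map_smul, Complex.add_im, posLF_im_mul_self hg a,
    posLF_im_mul_self hg b, smul_eq_mul, Complex.mul_im, Complex.I_re, Complex.I_im,
    Complex.neg_re, Complex.neg_im] at h1 h2
  rw [← hw, ← hv] at h1 h2
  apply Complex.ext <;> simp only [Complex.conj_re, Complex.conj_im] <;> linarith

lemma posLF_cauchy_schwarz {g : A →ₗ[ℂ] ℂ} (hg : IsPosLF g) (a b : A) :
    ‖g (star a * b)‖ ^ 2 ≤ (g (star a * a)).re * (g (star b * b)).re := by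
  set w := g (star a * b) with hw
  by_cases hw0 : w = 0
  · rw [hw0]
    simpa using mul_nonneg (posLF_re_nonneg hg (star_mul_self_nonneg a))
      (posLF_re_nonneg hg (star_mul_self_nonneg b))
  set lam : ℂ := starRingEnd ℂ w / (‖w‖ : ℂ) with hlam
  have habs : (‖w‖ : ℂ) ≠ 0 := by
    simpa [norm_eq_zero] using hw0
  have hcw : starRingEnd ℂ w * w = ((‖w‖ : ℂ)) ^ 2 := by
    rw [mul_comm, Complex.mul_conj]
    norm_cast
    rw [← Complex.sq_norm]
  have hlw : lam * w = (‖w‖ : ℂ) := by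
    rw [hlam, div_mul_eq_mul_div, hcw, sq, mul_div_assoc, div_self habs, mul_one]
  have hll : starRingEnd ℂ lam * lam = 1 := by
    rw [hlam, map_div₀, Complex.conj_conj, Complex.conj_ofReal]
    rw [div_mul_div_comm, mul_comm w _, hcw, sq]
    field_simp
  set c : A := lam • b with hc
  have hgac : g (star a * c) = (‖w‖ : ℂ) := by
    rw [hc, mul_smul_comm, map_smul, smul_eq_mul, ← hw, hlw]
  have hgca : g (star c * a) = (‖w‖ : ℂ) := by
    rw [posLF_star_comm hg a c, hgac, Complex.conj_ofReal]
  have hgcc : g (star c * c) = g (star b * b) := by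
    rw [hc, star_smul, smul_mul_assoc, mul_smul_comm, smul_smul, Complex.star_def, hll,
      one_smul]
  have key : ∀ r : ℝ, 0 ≤ (g (star b * b)).re * (r * r) + (-(2 * ‖w‖)) * r
      + (g (star a * a)).re := by
    intro r
    have hz := posLF_re_nonneg hg (star_mul_self_nonneg (r • c - a))
    have ez : star (r • c - a) * (r • c - a)
        = (r * r : ℝ) • (star c * c) - r • (star c * a) - r • (star a * c)
          + star a * a := by
      rw [star_sub, star_smul, star_trivial]
      simp only [sub_mul, mul_sub, smul_mul_assoc, mul_smul_comm, smul_smul]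
      module
    rw [ez] at hz
    simp only [map_add, map_sub, LinearMap.map_smul_of_tower, hgca, hgac, hgcc] at hz
    have hre : ((r * r : ℝ) • g (star b * b) - r • (‖w‖ : ℂ)
        - r • (‖w‖ : ℂ) + g (star a * a)).re
        = (g (star b * b)).re * (r * r) + (-(2 * ‖w‖)) * r
          + (g (star a * a)).re := by
      simp only [Complex.sub_re, Complex.add_re, Complex.smul_re, Complex.ofReal_re,
        smul_eq_mul]
      ring
    rw [hre] at hz
    exact hz
  have hd := discrim_le_zero key
  rw [discrim] at hd
  nlinarith [norm_nonneg w]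



lemma spec_pos {a : A} (ha : 0 ≤ a) (hau : IsUnit a) :
    ∀ t ∈ spectrum ℝ a, 0 < t := by
  intro t ht
  rcases (spectrum_nonneg_of_nonneg ha ht).lt_or_eq with h | h
  · exact h
  · exact absurd (h ▸ ht) (spectrum.zero_notMem_iff ℝ |>.mpr hau)

lemma rp_contOn {a : A} (ha : 0 ≤ a) (hau : IsUnit a) (β : ℝ) :
    ContinuousOn (fun t : ℝ => t ^ β) (spectrum ℝ a) := fun t ht =>
  (Real.continuousAt_rpow_const t β (Or.inl (spec_pos ha hau t ht).ne')).continuousWithinAt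

lemma rp_mul {a : A} (ha : 0 ≤ a) (hau : IsUnit a) (hsa : IsSelfAdjoint a) (β γ : ℝ) :
    cfc (fun t : ℝ => t ^ β) a * cfc (fun t : ℝ => t ^ γ) a
      = cfc (fun t : ℝ => t ^ (β + γ)) a := by
  rw [← cfc_mul _ _ a (rp_contOn ha hau β) (rp_contOn ha hau γ)]
  exact cfc_congr fun t ht => (Real.rpow_add (spec_pos ha hau t ht) β γ).symm

lemma rp_zero {a : A} (hsa : IsSelfAdjoint a) :
    cfc (fun t : ℝ => t ^ (0 : ℝ)) a = 1 := by
  have : (fun t : ℝ => t ^ (0 : ℝ)) = fun _ : ℝ => (1 : ℝ) := by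
    funext t; exact Real.rpow_zero t
  rw [this, cfc_const_one ℝ a]

lemma rp_one {a : A} (hsa : IsSelfAdjoint a) :
    cfc (fun t : ℝ => t ^ (1 : ℝ)) a = a := by
  have : (fun t : ℝ => t ^ (1 : ℝ)) = fun t : ℝ => t := by
    funext t; exact Real.rpow_one t
  rw [this, cfc_id' ℝ a]

lemma rp_nonneg {a : A} (ha : 0 ≤ a) (β : ℝ) :
    0 ≤ cfc (fun t : ℝ => t ^ β) a :=
  cfc_nonneg fun t ht => Real.rpow_nonneg (spectrum_nonneg_of_nonneg ha ht) β

lemma rp_selfAdjoint {a : A} (ha : 0 ≤ a) (β : ℝ) :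
    IsSelfAdjoint (cfc (fun t : ℝ => t ^ β) a) :=
  IsSelfAdjoint.of_nonneg (rp_nonneg ha β)

/-- composition through the square root -/
lemma rp_sqrt {a : A} (ha : 0 ≤ a) (hau : IsUnit a) (hsa : IsSelfAdjoint a) (β : ℝ) :
    cfc (fun t : ℝ => t ^ β) (cfc (fun t : ℝ => Real.sqrt t) a)
      = cfc (fun t : ℝ => t ^ (β / 2)) a := by
  have hsqrt : ContinuousOn (fun t : ℝ => Real.sqrt t) (spectrum ℝ a) :=
    Real.continuous_sqrt.continuousOn
  have hg : ContinuousOn (fun t : ℝ => t ^ β)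
      ((fun t : ℝ => Real.sqrt t) '' spectrum ℝ a) := by
    rintro - ⟨t, ht, rfl⟩
    exact (Real.continuousAt_rpow_const _ β
      (Or.inl (Real.sqrt_pos.mpr (spec_pos ha hau t ht)).ne')).continuousWithinAt
  rw [← cfc_comp' _ _ a hg hsqrt]
  exact cfc_congr fun t ht => by
    rw [Real.sqrt_eq_rpow, ← Real.rpow_mul (spec_pos ha hau t ht).le]
    congr 1
    ring

lemma rp_mul_self {a : A} (ha : 0 ≤ a) (hau : IsUnit a) (hsa : IsSelfAdjoint a) (β : ℝ) :
    cfc (fun t : ℝ => t ^ β) a * a = cfc (fun t : ℝ => t ^ (β + 1)) a := by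
  have h := cfc_mul (a := a) (fun t : ℝ => t ^ β) (fun t : ℝ => t)
    (rp_contOn ha hau β) (by fun_prop)
  rw [cfc_id' ℝ a] at h
  rw [← h]
  exact cfc_congr fun t ht => by
    rw [← Real.rpow_add_one (spec_pos ha hau t ht).ne' β]



lemma state_algebraMap {g : A →ₗ[ℂ] ℂ} (hg : IsState g) (r : ℝ) :
    g (algebraMap ℝ A r) = (r : ℂ) := by
  rw [Algebra.algebraMap_eq_smul_one, show (r : ℝ) • (1 : A) = (r : ℂ) • (1 : A) by
    simp [Complex.coe_smul], map_smul, hg.2, smul_eq_mul, mul_one]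

lemma posLF_re_mono {g : A →ₗ[ℂ] ℂ} (hg : IsPosLF g) {a b : A} (h : a ≤ b) :
    (g a).re ≤ (g b).re :=
  (Complex.le_def.mp (posLF_mono hg h)).1

lemma holder_mccarthy {g : A →ₗ[ℂ] ℂ} (hg : IsState g) {a : A} (ha : 0 ≤ a) {t : ℝ}
    (ht : 1 ≤ t) :
    (g a).re ^ t ≤ (g (cfc (fun s : ℝ => s ^ t) a)).re := by
  have ht0 : (0 : ℝ) < t := lt_of_lt_of_le one_pos ht
  have hcont : ContinuousOn (fun s : ℝ => s ^ t) (spectrum ℝ a) :=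
    (Real.continuous_rpow_const ht0.le).continuousOn
  have hnn : 0 ≤ cfc (fun s : ℝ => s ^ t) a :=
    cfc_nonneg fun s hs => Real.rpow_nonneg (spectrum_nonneg_of_nonneg ha hs) t
  have he0 : 0 ≤ (g a).re := posLF_re_nonneg hg.1 ha
  set e := (g a).re with he
  rcases he0.lt_or_eq with hepos | hezero
  swap
  · rw [← hezero, Real.zero_rpow ht0.ne']
    exact posLF_re_nonneg hg.1 hnn
  set κ : ℝ := e ^ t - t * e ^ t with hκ
  set μ : ℝ := t * e ^ t / e with hμ
  have het : (0 : ℝ) < e ^ t := Real.rpow_pos_of_pos hepos t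
  have key : ∀ s ∈ spectrum ℝ a, κ + μ * s ≤ s ^ t := by
    intro s hs
    have hs0 : 0 ≤ s := spectrum_nonneg_of_nonneg ha hs
    have hb := one_add_mul_self_le_rpow_one_add
      (s := s / e - 1) (by
        have : (0 : ℝ) ≤ s / e := div_nonneg hs0 hepos.le
        linarith) ht
    have h1 : (1 : ℝ) + (s / e - 1) = s / e := by ring
    rw [h1, Real.div_rpow hs0 hepos.le] at hb
    have hb2 := mul_le_mul_of_nonneg_left hb het.le
    have h3 : e ^ t * (s ^ t / e ^ t) = s ^ t := by field_simp
    have h4 : e ^ t * (1 + t * (s / e - 1)) = κ + μ * s := by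
      rw [hκ, hμ]; field_simp; ring
    rw [h3, h4] at hb2
    exact hb2
  have hop : cfc (fun s : ℝ => κ + μ * s) a ≤ cfc (fun s : ℝ => s ^ t) a :=
    cfc_mono key (by fun_prop) hcont
  have haff : cfc (fun s : ℝ => κ + μ * s) a = algebraMap ℝ A κ + μ • a := by
    have h₁ : cfc (fun s : ℝ => κ + μ * s) a
        = cfc (fun _ : ℝ => κ) a + cfc (fun s : ℝ => μ * s) a :=
      cfc_add (a := a) (fun _ : ℝ => κ) (fun s : ℝ => μ * s) (by fun_prop) (by fun_prop)
    rw [h₁, cfc_const κ a, cfc_const_mul_id μ a]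
  have hre := posLF_re_mono hg.1 hop
  rw [haff, map_add, state_algebraMap hg, LinearMap.map_smul_of_tower] at hre
  have : (↑κ + μ • g a).re = κ + μ * e := by
    simp [Complex.add_re, Complex.smul_re]; exact Or.inl rfl
  rw [this] at hre
  have hfinal : κ + μ * e = e ^ t := by
    rw [hκ, hμ]; field_simp; ring
  rw [hfinal] at hre
  exact hre



/-- Conjugation by an element `u` with `star u * u = 1 = u * star u`, as a star algebra
homomorphism. -/
noncomputable def conjHom (u : A) (h1 : star u * u = 1) (h2 : u * star u = 1) :
    A →⋆ₐ[ℂ] A where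
  toFun z := u * z * star u
  map_one' := by simpa using h2
  map_mul' a b := by
    have : u * a * star u * (u * b * star u) = u * a * ((star u * u) * (b * star u)) := by
      simp only [mul_assoc]
    rw [this, h1, one_mul]
    simp only [mul_assoc]
  map_zero' := by simp
  map_add' a b := by simp [mul_add, add_mul]
  commutes' z := by
    simp only [Algebra.algebraMap_eq_smul_one, mul_smul_comm, smul_mul_assoc, one_mul,
      mul_one, h2]
  map_star' z := by
    simp only [star_mul, star_star, mul_assoc]

lemma conj_cfc (u a : A) (h1 : star u * u = 1) (h2 : u * star u = 1) (f : ℝ → ℝ)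
    (hf : ContinuousOn f (spectrum ℝ a)) (ha : IsSelfAdjoint a) :
    u * cfc f a * star u = cfc f (u * a * star u) := by
  have hcont : Continuous fun z : A => u * z * star u := by
    exact (continuous_mul_right (star u)).comp (continuous_mul_left u)
  have hsa2 : IsSelfAdjoint (u * a * star u) := ha.conjugate u
  exact StarAlgHom.map_cfc (conjHom u h1 h2) f a hf hcont ha hsa2



lemma key_term {g : A →ₗ[ℂ] ℂ} (hg : IsState g) (p q x : A) (hx : IsUnit x)
    (α n : ℝ) (hn : 2 ≤ n) :
    ‖g (p * x * q)‖ ≤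
      (1 / n) * (g (cfc (fun t : ℝ => t ^ (n / 2))
          (p * cfc (fun t : ℝ => t ^ (2 * (1 - α))) (absA (star x)) * star p))).re
        + ((n - 1) / n) *
          ‖star q * cfc (fun t : ℝ => t ^ (2 * α)) (absA x) * q‖ ^ (n / (2 * (n - 1))) := by
  obtain ⟨xu, rfl⟩ := hx
  set x : A := (xu : A) with hxdef
  have hx : IsUnit x := xu.isUnit
  -- the two positive invertible elements
  set c : A := star x * x with hc
  set d : A := x * star x with hd
  have hc0 : 0 ≤ c := star_mul_self_nonneg x
  have hd0 : 0 ≤ d := mul_star_self_nonneg x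
  have hcu : IsUnit c := hx.star.mul hx
  have hdu : IsUnit d := hx.mul hx.star
  have hcsa : IsSelfAdjoint c := IsSelfAdjoint.of_nonneg hc0
  have hdsa : IsSelfAdjoint d := IsSelfAdjoint.of_nonneg hd0
  have hmul : ∀ β γ : ℝ, cfc (fun t : ℝ => t ^ β) c * cfc (fun t : ℝ => t ^ γ) c
      = cfc (fun t : ℝ => t ^ (β + γ)) c := rp_mul hc0 hcu hcsa
  -- rewrite the absA-terms
  have hQ : cfc (fun t : ℝ => t ^ (2 * α)) (absA x)
      = cfc (fun t : ℝ => t ^ α) c := by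
    rw [absA, ← hc, rp_sqrt hc0 hcu hcsa (2 * α), show (2 * α) / 2 = α by ring]
  have hP : cfc (fun t : ℝ => t ^ (2 * (1 - α))) (absA (star x))
      = cfc (fun t : ℝ => t ^ (1 - α)) d := by
    rw [absA, star_star, ← hd, rp_sqrt hd0 hdu hdsa (2 * (1 - α)),
      show (2 * (1 - α)) / 2 = 1 - α by ring]
  rw [hQ, hP]
  -- the polar unitary
  set minv : A := cfc (fun t : ℝ => t ^ (-(1 / 2) : ℝ)) c with hminv
  set u : A := x * minv with hu
  have hmsa : IsSelfAdjoint minv := rp_selfAdjoint hc0 _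
  have hone : cfc (fun t : ℝ => t ^ (0 : ℝ)) c = 1 := rp_zero hcsa
  have hmc : minv * c * minv = 1 := by
    rw [hminv, rp_mul_self hc0 hcu hcsa, show (-(1/2 : ℝ) + 1) = 1/2 by norm_num, hmul,
      show ((1:ℝ)/2 + -(1/2)) = 0 by norm_num, hone]
  have hminv2 : minv * minv = cfc (fun t : ℝ => t ^ (-1 : ℝ)) c := by
    rw [hminv, hmul]; norm_num
  have hcinv : cfc (fun t : ℝ => t ^ (-1 : ℝ)) c * c = 1 := by
    rw [rp_mul_self hc0 hcu hcsa, show (-1 + 1 : ℝ) = 0 by norm_num, hone]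
  have huu : star u * u = 1 := by
    rw [hu, star_mul, hmsa.star_eq]
    have e1 : minv * star x * (x * minv) = minv * (star x * x) * minv := by
      simp only [mul_assoc]
    rw [e1, ← hc, hmc]
  have hstarx : c * ↑xu⁻¹ = star x := by
    rw [hc]
    calc star x * x * ↑xu⁻¹ = star x * (x * ↑xu⁻¹) := by rw [mul_assoc]
      _ = star x := by rw [hxdef, Units.mul_inv, mul_one]
  have huu2 : u * star u = 1 := by
    rw [hu, star_mul, hmsa.star_eq]
    have e1 : x * minv * (minv * star x) = x * (minv * minv) * star x := by
      simp only [mul_assoc]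
    rw [e1, hminv2, ← hstarx]
    have e2 : x * cfc (fun t : ℝ => t ^ (-1 : ℝ)) c * (c * ↑xu⁻¹)
        = x * (cfc (fun t : ℝ => t ^ (-1 : ℝ)) c * c) * ↑xu⁻¹ := by
      simp only [mul_assoc]
    rw [e2, hcinv, mul_one, hxdef, Units.mul_inv]
  have hud : u * c * star u = d := by
    rw [hu, star_mul, hmsa.star_eq]
    have e1 : x * minv * c * (minv * star x) = x * (minv * c * minv) * star x := by
      simp only [mul_assoc]
    rw [e1, hmc, mul_one, ← hd]
  have hconj : u * cfc (fun t : ℝ => t ^ (1 - α)) c * star u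
      = cfc (fun t : ℝ => t ^ (1 - α)) d := by
    rw [conj_cfc u c huu huu2 _ (rp_contOn hc0 hcu _) hcsa, hud]
  have hux : u * cfc (fun t : ℝ => t ^ ((1:ℝ)/2)) c = x := by
    rw [hu]
    have e1 : x * minv * cfc (fun t : ℝ => t ^ ((1:ℝ)/2)) c
        = x * (minv * cfc (fun t : ℝ => t ^ ((1:ℝ)/2)) c) := by simp only [mul_assoc]
    rw [e1, hminv, hmul, show (-(1/2 : ℝ) + 1/2) = 0 by norm_num, hone, mul_one]
  -- the Cauchy–Schwarz decomposition
  set w1 : ℝ := (1 - α) / 2 with hw1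
  set aa : A := cfc (fun t : ℝ => t ^ w1) c * (star u * star p) with haa
  set bb : A := cfc (fun t : ℝ => t ^ (α / 2)) c * q with hbb
  have hcpsa : ∀ β : ℝ, star (cfc (fun t : ℝ => t ^ β) c) = cfc (fun t : ℝ => t ^ β) c :=
    fun β => (rp_selfAdjoint hc0 β).star_eq
  have hstar_aa : star aa = p * u * cfc (fun t : ℝ => t ^ w1) c := by
    rw [haa, star_mul, hcpsa, star_mul, star_star, star_star]
  have h1 : star aa * bb = p * x * q := by
    rw [hstar_aa, hbb]
    have e1 : p * u * cfc (fun t : ℝ => t ^ w1) c * (cfc (fun t : ℝ => t ^ (α/2)) c * q)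
        = p * (u * (cfc (fun t : ℝ => t ^ w1) c * cfc (fun t : ℝ => t ^ (α/2)) c)) * q := by
      simp only [mul_assoc]
    rw [e1, hmul, show (w1 + α/2) = 1/2 by rw [hw1]; ring, hux]
  have h2 : star aa * aa = p * cfc (fun t : ℝ => t ^ (1 - α)) d * star p := by
    rw [hstar_aa, haa]
    have e1 : p * u * cfc (fun t : ℝ => t ^ w1) c
          * (cfc (fun t : ℝ => t ^ w1) c * (star u * star p))
        = p * (u * ((cfc (fun t : ℝ => t ^ w1) c * cfc (fun t : ℝ => t ^ w1) c) * star u))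
          * star p := by
      simp only [mul_assoc]
    rw [e1, hmul, show (w1 + w1) = 1 - α by rw [hw1]; ring]
    rw [← hconj]
    simp only [mul_assoc]
  have h3 : star bb * bb = star q * cfc (fun t : ℝ => t ^ α) c * q := by
    rw [hbb, star_mul, hcpsa]
    have e1 : star q * cfc (fun t : ℝ => t ^ (α/2)) c
          * (cfc (fun t : ℝ => t ^ (α/2)) c * q)
        = star q * (cfc (fun t : ℝ => t ^ (α/2)) c * cfc (fun t : ℝ => t ^ (α/2)) c) * q := by
      simp only [mul_assoc]
    rw [e1, hmul, show (α/2 + α/2) = α by ring]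
  -- Cauchy–Schwarz
  have hcs := posLF_cauchy_schwarz hg.1 aa bb
  rw [h1, h2, h3] at hcs
  set P : A := p * cfc (fun t : ℝ => t ^ (1 - α)) d * star p with hPdef
  set Q : A := star q * cfc (fun t : ℝ => t ^ α) c * q with hQdef
  have hPpos : 0 ≤ P := h2 ▸ star_mul_self_nonneg aa
  have hQpos : 0 ≤ Q := h3 ▸ star_mul_self_nonneg bb
  have hGP0 : 0 ≤ (g P).re := posLF_re_nonneg hg.1 hPpos
  have hGQ0 : 0 ≤ (g Q).re := posLF_re_nonneg hg.1 hQpos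
  set GP : ℝ := (g P).re
  set GQ : ℝ := (g Q).re
  -- numeric bound via sqrt
  have habs : ‖g (p * x * q)‖ ≤ Real.sqrt GP * Real.sqrt GQ := by
    have h := Real.sqrt_le_sqrt hcs
    rw [Real.sqrt_sq (norm_nonneg _), Real.sqrt_mul hGP0] at h
    exact h
  have hn1 : (1:ℝ) < n := by linarith
  have hnpos : (0:ℝ) < n := by linarith
  have hn1pos : (0:ℝ) < n - 1 := by linarith
  have hpq : n.HolderConjugate (n / (n - 1)) := by
    have := Real.HolderConjugate.conjExponent (p := n) hn1
    simpa [Real.conjExponent] using this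
  have hyoung := Real.young_inequality_of_nonneg (Real.sqrt_nonneg GP) (Real.sqrt_nonneg GQ) hpq
  have hsGP : Real.sqrt GP ^ n = GP ^ (n / 2) := by
    rw [Real.sqrt_eq_rpow, ← Real.rpow_mul hGP0, show ((1:ℝ)/2*n : ℝ) = n/2 by ring]
  have hsGQ : Real.sqrt GQ ^ (n/(n-1)) = GQ ^ (n / (2*(n-1))) := by
    rw [Real.sqrt_eq_rpow, ← Real.rpow_mul hGQ0]
    congr 1
    field_simp
  rw [hsGP, hsGQ] at hyoung
  have hdivq : GQ ^ (n/(2*(n-1))) / (n/(n-1)) = ((n-1)/n) * GQ ^ (n/(2*(n-1))) := by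
    field_simp
  have hhm : GP ^ (n/2) ≤ (g (cfc (fun s : ℝ => s ^ (n/2)) P)).re :=
    holder_mccarthy hg hPpos (by linarith)
  have hnorm : GQ ^ (n/(2*(n-1))) ≤ ‖Q‖ ^ (n/(2*(n-1))) :=
    Real.rpow_le_rpow hGQ0 (state_re_le_norm hg hQpos) (by positivity)
  calc ‖g (p * x * q)‖ ≤ Real.sqrt GP * Real.sqrt GQ := habs
    _ ≤ GP ^ (n/2)/n + GQ ^ (n/(2*(n-1)))/(n/(n-1)) := hyoung
    _ = GP ^ (n/2)/n + ((n-1)/n) * GQ ^ (n/(2*(n-1))) := by rw [hdivq]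
    _ ≤ (g (cfc (fun s : ℝ => s ^ (n/2)) P)).re / n
        + ((n-1)/n) * ‖Q‖ ^ (n/(2*(n-1))) := by
      gcongr
    _ = (1 / n) * (g (cfc (fun t : ℝ => t ^ (n / 2)) P)).re
        + ((n - 1) / n) * ‖Q‖ ^ (n / (2 * (n - 1))) := by ring


/-- numerical radius bound for `p x q + r y s` with `x, y` invertible. -/
theorem stmt19 (p q r s x y : A) (hx : IsUnit x) (hy : IsUnit y)
    (α : ℝ) (hα0 : 0 ≤ α) (hα1 : α ≤ 1) (n : ℝ) (hn : 2 ≤ n) :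
    nr (p * x * q + r * y * s) ≤
      (1 / n) *
          ‖cfc (fun t : ℝ => t ^ (n / 2))
              (p * cfc (fun t : ℝ => t ^ (2 * (1 - α))) (absA (star x)) * star p) +
            cfc (fun t : ℝ => t ^ (n / 2))
              (r * cfc (fun t : ℝ => t ^ (2 * (1 - α))) (absA (star y)) * star r)‖ +
        ((n - 1) / n) *
          (‖star q * cfc (fun t : ℝ => t ^ (2 * α)) (absA x) * q‖ ^ (n / (2 * (n - 1))) +
            ‖star s * cfc (fun t : ℝ => t ^ (2 * α)) (absA y) * s‖ ^ (n / (2 * (n - 1)))) := by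
  have hnpos : (0:ℝ) < n := by linarith
  set P1 : A := p * cfc (fun t : ℝ => t ^ (2 * (1 - α))) (absA (star x)) * star p with hP1def
  set P2 : A := r * cfc (fun t : ℝ => t ^ (2 * (1 - α))) (absA (star y)) * star r with hP2def
  set Q1 : A := star q * cfc (fun t : ℝ => t ^ (2 * α)) (absA x) * q with hQ1def
  set Q2 : A := star s * cfc (fun t : ℝ => t ^ (2 * α)) (absA y) * s with hQ2def
  have habsx : 0 ≤ absA (star x) := cfc_nonneg fun t _ => Real.sqrt_nonneg t
  have habsy : 0 ≤ absA (star y) := cfc_nonneg fun t _ => Real.sqrt_nonneg t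
  have hP1pos : 0 ≤ P1 := star_right_conjugate_nonneg (rp_nonneg habsx _) p
  have hP2pos : 0 ≤ P2 := star_right_conjugate_nonneg (rp_nonneg habsy _) r
  have hCP1 : 0 ≤ cfc (fun t : ℝ => t ^ (n / 2)) P1 := rp_nonneg hP1pos _
  have hCP2 : 0 ≤ cfc (fun t : ℝ => t ^ (n / 2)) P2 := rp_nonneg hP2pos _
  have hRHS0 : 0 ≤ (1 / n) *
      ‖cfc (fun t : ℝ => t ^ (n / 2)) P1 + cfc (fun t : ℝ => t ^ (n / 2)) P2‖ +
      ((n - 1) / n) * (‖Q1‖ ^ (n / (2 * (n - 1))) + ‖Q2‖ ^ (n / (2 * (n - 1)))) := by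
    refine add_nonneg (mul_nonneg (by positivity) (norm_nonneg _))
      (mul_nonneg (div_nonneg (by linarith) (by linarith))
        (add_nonneg (Real.rpow_nonneg (norm_nonneg _) _)
          (Real.rpow_nonneg (norm_nonneg _) _)))
  unfold nr
  apply Real.sSup_le _ hRHS0
  rintro - ⟨g, hgs, rfl⟩
  rw [map_add]
  calc ‖g (p * x * q) + g (r * y * s)‖
      ≤ ‖g (p * x * q)‖ + ‖g (r * y * s)‖ :=
        norm_add_le _ _
    _ ≤ ((1 / n) * (g (cfc (fun t : ℝ => t ^ (n / 2)) P1)).re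
          + ((n - 1) / n) * ‖Q1‖ ^ (n / (2 * (n - 1))))
        + ((1 / n) * (g (cfc (fun t : ℝ => t ^ (n / 2)) P2)).re
          + ((n - 1) / n) * ‖Q2‖ ^ (n / (2 * (n - 1)))) :=
        add_le_add (key_term hgs p q x hx α n hn) (key_term hgs r s y hy α n hn)
    _ = (1 / n) * ((g (cfc (fun t : ℝ => t ^ (n / 2)) P1)).re
          + (g (cfc (fun t : ℝ => t ^ (n / 2)) P2)).re)
        + ((n - 1) / n) * (‖Q1‖ ^ (n / (2 * (n - 1))) + ‖Q2‖ ^ (n / (2 * (n - 1)))) := by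
        ring
    _ ≤ (1 / n) *
          ‖cfc (fun t : ℝ => t ^ (n / 2)) P1 + cfc (fun t : ℝ => t ^ (n / 2)) P2‖ +
        ((n - 1) / n) * (‖Q1‖ ^ (n / (2 * (n - 1))) + ‖Q2‖ ^ (n / (2 * (n - 1)))) := by
        have hre : (g (cfc (fun t : ℝ => t ^ (n / 2)) P1)).re
            + (g (cfc (fun t : ℝ => t ^ (n / 2)) P2)).re
            = (g (cfc (fun t : ℝ => t ^ (n / 2)) P1 + cfc (fun t : ℝ => t ^ (n / 2)) P2)).re := by
          rw [map_add, Complex.add_re]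
        have hle : (g (cfc (fun t : ℝ => t ^ (n / 2)) P1)).re
            + (g (cfc (fun t : ℝ => t ^ (n / 2)) P2)).re
            ≤ ‖cfc (fun t : ℝ => t ^ (n / 2)) P1 + cfc (fun t : ℝ => t ^ (n / 2)) P2‖ := by
          rw [hre]
          exact state_re_le_norm hgs (add_nonneg hCP1 hCP2)
        have h1n : (0:ℝ) ≤ 1 / n := by positivity
        exact add_le_add (mul_le_mul_of_nonneg_left hle h1n) le_rfl

end
end
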